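/- Let x and y be complex numbers of absolute value 1 with x^a, x^b, x^c pairwise distinct and y^a, y^b, y^c pairwise distinct, for integers a, b, c. If (x^a − x^b)/(x^a − x^c) = (y^a − y^b)/(y^a − y^c), then x^b / x^c = y^b / y^c. -/

import Mathlib

theorem stmt_2 (x y : ℂ) (hx : ‖x‖ = 1) (hy : ‖y‖ = 1)
    (a b c : ℤ)
    (hx1 : x ^ a ≠ x ^ b) (hx2 : x ^ a ≠ x ^ c) (hx3 : x ^ b ≠ x ^ c)
    (hy1 : y ^ a ≠ y ^ b) (hy2 : y ^ a ≠ y ^ c) (hy3 : y ^ b ≠ y ^ c)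
    (h : (x ^ a - x ^ b) / (x ^ a - x ^ c) = (y ^ a - y ^ b) / (y ^ a - y ^ c)) :
    x ^ b / x ^ c = y ^ b / y ^ c := by
  have hx0 : x ≠ 0 := by
    intro h0; rw [h0] at hx; simp at hx
  have hy0 : y ≠ 0 := by
    intro h0; rw [h0] at hy; simp at hy
  have cx : ∀ n : ℤ, (starRingEnd ℂ) (x ^ n) = (x ^ n)⁻¹ := by
    intro n
    rw [map_zpow₀, ← inv_zpow]
    congr 1
    rw [Complex.inv_def, Complex.normSq_eq_norm_sq, hx]
    simp
  have cy : ∀ n : ℤ, (starRingEnd ℂ) (y ^ n) = (y ^ n)⁻¹ := by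
    intro n
    rw [map_zpow₀, ← inv_zpow]
    congr 1
    rw [Complex.inv_def, Complex.normSq_eq_norm_sq, hy]
    simp
  have hxab : x ^ a - x ^ b ≠ 0 := sub_ne_zero.mpr hx1
  have hxac : x ^ a - x ^ c ≠ 0 := sub_ne_zero.mpr hx2
  have hyab : y ^ a - y ^ b ≠ 0 := sub_ne_zero.mpr hy1
  have hyac : y ^ a - y ^ c ≠ 0 := sub_ne_zero.mpr hy2
  have hxa : x ^ a ≠ 0 := zpow_ne_zero _ hx0
  have hxb : x ^ b ≠ 0 := zpow_ne_zero _ hx0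
  have hxc : x ^ c ≠ 0 := zpow_ne_zero _ hx0
  have hya : y ^ a ≠ 0 := zpow_ne_zero _ hy0
  have hyb : y ^ b ≠ 0 := zpow_ne_zero _ hy0
  have hyc : y ^ c ≠ 0 := zpow_ne_zero _ hy0
  have keyx : (starRingEnd ℂ) ((x ^ a - x ^ b) / (x ^ a - x ^ c)) =
      (x ^ a - x ^ b) / (x ^ a - x ^ c) * (x ^ c / x ^ b) := by
    have hd : (x ^ a)⁻¹ - (x ^ c)⁻¹ ≠ 0 :=
      sub_ne_zero.mpr (fun e => hx2 (inv_injective e))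
    rw [map_div₀, map_sub, map_sub, cx, cx, cx, div_mul_div_comm,
      div_eq_div_iff hd (mul_ne_zero hxac hxb)]
    field_simp
    ring
  have keyy : (starRingEnd ℂ) ((y ^ a - y ^ b) / (y ^ a - y ^ c)) =
      (y ^ a - y ^ b) / (y ^ a - y ^ c) * (y ^ c / y ^ b) := by
    have hd : (y ^ a)⁻¹ - (y ^ c)⁻¹ ≠ 0 :=
      sub_ne_zero.mpr (fun e => hy2 (inv_injective e))
    rw [map_div₀, map_sub, map_sub, cy, cy, cy, div_mul_div_comm,
      div_eq_div_iff hd (mul_ne_zero hyac hyb)]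
    field_simp
    ring
  have h2 := congrArg (starRingEnd ℂ) h
  rw [keyx, keyy, h] at h2
  have hr : (y ^ a - y ^ b) / (y ^ a - y ^ c) ≠ 0 := div_ne_zero hyab hyac
  have h3 : x ^ c / x ^ b = y ^ c / y ^ b := mul_left_cancel₀ hr h2
  rw [div_eq_div_iff hxb hyb] at h3
  rw [div_eq_div_iff hxc hyc]
  linear_combination -h3
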